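/- In the two-variable power reallocation problem: maximize B·log₂((h_m Q + σ²)/(h_m(Q − p_m) + σ²)) + B·log₂((h_n Q + σ²)/(h_n(Q − p_n) + σ²)) subject to p_m + p_n = C, p_m ≥ L_m, p_n ≥ L_n (with L_m + L_n ≤ C ≤ Q), every optimal solution satisfies p_m = L_m or p_n = L_n. -/

import Mathlib

open Real

/-- Auxiliary: from an inequality between sums of `logb` of quotients with positive
entries, deduce an inequality between products of denominators. -/
lemma logb_quot_ineq (c A A' x y u v : ℝ) (hc : 0 < c) (hA : 0 < A) (hA' : 0 < A')
    (hx : 0 < x) (hy : 0 < y) (hu : 0 < u) (hv : 0 < v)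
    (h : c * Real.logb 2 (A / x) + c * Real.logb 2 (A' / y) ≤
         c * Real.logb 2 (A / u) + c * Real.logb 2 (A' / v)) :
    u * v ≤ x * y := by
  have h2 : (0:ℝ) < Real.log 2 := Real.log_pos (by norm_num)
  rw [Real.logb, Real.logb, Real.logb, Real.logb,
    Real.log_div hA.ne' hx.ne', Real.log_div hA.ne' hu.ne',
    Real.log_div hA'.ne' hy.ne', Real.log_div hA'.ne' hv.ne'] at h
  have h3 : c * (Real.log A - Real.log x + (Real.log A' - Real.log y)) / Real.log 2 ≤
      c * (Real.log A - Real.log u + (Real.log A' - Real.log v)) / Real.log 2 := by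
    ring_nf at h ⊢
    linarith
  have h4 : c * (Real.log A - Real.log x + (Real.log A' - Real.log y)) ≤
      c * (Real.log A - Real.log u + (Real.log A' - Real.log v)) :=
    (div_le_div_iff_of_pos_right h2).mp h3
  have h5 := (mul_le_mul_iff_right₀ hc).mp h4
  have h' : Real.log u + Real.log v ≤ Real.log x + Real.log y := by linarith
  rw [← Real.log_mul hu.ne' hv.ne', ← Real.log_mul hx.ne' hy.ne'] at h'
  exact (Real.log_le_log_iff (by positivity) (by positivity)).mp h'

theorem stmt_6 (B hm hn σ2 Q Lm Ln C : ℝ) (hB : 0 < B) (hhm : 0 < hm)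
    (hhn : 0 < hn) (hσ2 : 0 < σ2) (hQ : 0 < Q) (hLm : 0 ≤ Lm) (hLn : 0 ≤ Ln)
    (hC1 : Lm + Ln ≤ C) (hC2 : C ≤ Q)
    (pm pn : ℝ) (hpm : Lm ≤ pm) (hpn : Ln ≤ pn) (hsum : pm + pn = C)
    (hopt : ∀ qm qn : ℝ, Lm ≤ qm → Ln ≤ qn → qm + qn = C →
      B * Real.logb 2 ((hm * Q + σ2) / (hm * (Q - qm) + σ2)) +
          B * Real.logb 2 ((hn * Q + σ2) / (hn * (Q - qn) + σ2)) ≤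
        B * Real.logb 2 ((hm * Q + σ2) / (hm * (Q - pm) + σ2)) +
          B * Real.logb 2 ((hn * Q + σ2) / (hn * (Q - pn) + σ2))) :
    pm = Lm ∨ pn = Ln := by
  by_contra hcon
  push_neg at hcon
  obtain ⟨h1, h2⟩ := hcon
  have hpm' : Lm < pm := lt_of_le_of_ne hpm (Ne.symm h1)
  have hpn' : Ln < pn := lt_of_le_of_ne hpn (Ne.symm h2)
  have hA : 0 < hm * Q + σ2 := by positivity
  have hA' : 0 < hn * Q + σ2 := by positivity
  -- positivity of denominators
  have dpos : ∀ t : ℝ, t ≤ Q → (0:ℝ) < hm * (Q - t) + σ2 := by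
    intro t ht; nlinarith
  have dpos' : ∀ t : ℝ, t ≤ Q → (0:ℝ) < hn * (Q - t) + σ2 := by
    intro t ht; nlinarith
  have hpmQ : pm ≤ Q := by linarith
  have hpnQ : pn ≤ Q := by linarith
  have hLmQ : Lm ≤ Q := by linarith
  have hLnQ : Ln ≤ Q := by linarith
  have hq1 : C - Lm ≤ Q := by linarith
  have hq2 : C - Ln ≤ Q := by linarith
  -- endpoint 1: (Lm, C - Lm)
  have e1 := hopt Lm (C - Lm) le_rfl (by linarith) (by ring)
  -- endpoint 2: (C - Ln, Ln)
  have e2 := hopt (C - Ln) Ln (by linarith) le_rfl (by ring)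
  have P1 : (hm * (Q - pm) + σ2) * (hn * (Q - pn) + σ2) ≤
      (hm * (Q - Lm) + σ2) * (hn * (Q - (C - Lm)) + σ2) :=
    logb_quot_ineq B (hm * Q + σ2) (hn * Q + σ2) _ _ _ _ hB hA hA'
      (dpos _ hLmQ) (dpos' _ hq1) (dpos _ hpmQ) (dpos' _ hpnQ) e1
  have P2 : (hm * (Q - pm) + σ2) * (hn * (Q - pn) + σ2) ≤
      (hm * (Q - (C - Ln)) + σ2) * (hn * (Q - Ln) + σ2) :=
    logb_quot_ineq B (hm * Q + σ2) (hn * Q + σ2) _ _ _ _ hB hA hA'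
      (dpos _ hq2) (dpos' _ hLnQ) (dpos _ hpmQ) (dpos' _ hpnQ) e2
  have hpn_eq : pn = C - pm := by linarith
  subst hpn_eq
  have hb : pm < C - Ln := by linarith
  nlinarith [mul_pos (sub_pos.mpr hpm') (sub_pos.mpr hb),
    mul_pos (mul_pos hhm hhn) (mul_pos (sub_pos.mpr hpm') (sub_pos.mpr hb)),
    mul_pos (mul_pos (mul_pos hhm hhn) (mul_pos (sub_pos.mpr hpm') (sub_pos.mpr hb))) (sub_pos.mpr (hpm'.trans hb))]
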